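/- Consider the forced-move cops-and-robbers game on a k-regularly oriented toroidal grid C_n □ C_n with 2 ≤ k < n. Let K₁ and K₂ be maximal confluxes with τ(K₁) = −τ(K₂) and 𝔡(K₁,K₂) = 2, all of whose main corners are occupied by cops (four cops), with one additional cop forcing the robber to move (five cops in total). If the robber occupies a vertex of B(K₁,K₂), then the cops can guarantee that after finitely many turns the robber occupies a conflux outside B(K₁,K₂). -/

import Mathlib

namespace CopsPaper

/-! ## Generic cops-and-robbers machinery.

A cop strategy is a function from the list of robber positions seen so far to
the new cop positions.  Quantifying over all (legal) robber position sequences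
is equivalent to quantifying over all robber strategies. -/

/-- A lazy step in a digraph: stay put or move along an arc. -/
def Step {α : Type*} (A : α → α → Prop) (u v : α) : Prop := u = v ∨ A u v

/-- The cop positions induced by a cop strategy `σ` against the robber
trajectory `rob`, in the game where the cops move first:
`cops 0 = σ []` are the initial positions, and the cops' `(t+1)`-st positions
are chosen after seeing `rob 0, …, rob t`. -/
def playCops {α ι : Type*} (σ : List α → ι → α) (rob : ℕ → α) (t : ℕ) : ι → α :=
  σ ((List.range t).map rob)

/-- `k` cops have a winning strategy in the cops-and-robbers game on the
digraph with arc relation `A` (both cops and robber may stay put or move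
along an arc on their turn; the cops choose their positions first, the robber
then chooses any starting vertex, and the cops win if at some moment a cop
occupies the robber's vertex). -/
def CopsWin {α : Type*} (A : α → α → Prop) (k : ℕ) : Prop :=
  ∃ σ : List α → Fin k → α,
    ∀ rob : ℕ → α, (∀ t, Step A (rob t) (rob (t + 1))) →
      (∀ t i, Step A (playCops σ rob t i) (playCops σ rob (t + 1) i)) ∧
      ∃ t, ∃ i, playCops σ rob t i = rob t ∨ playCops σ rob (t + 1) i = rob t

/-- The cop number of a digraph. -/
noncomputable def copNumber {α : Type*} (A : α → α → Prop) : ℕ :=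
  sInf {k | CopsWin A k}

/-- Cop positions in a game played from a given position: the cops start at
`c₀`, the robber moves first, and the cops' `(t+1)`-st positions are chosen
after seeing `rob 0, …, rob (t+1)`. -/
def copsFrom {α ι : Type*} (σ : List α → ι → α) (c₀ : ι → α) (rob : ℕ → α) :
    ℕ → ι → α
  | 0 => c₀
  | t + 1 => σ ((List.range (t + 2)).map rob)

/-- The robber is captured in the position game (robber moves first):
either a cop moves onto the robber's current vertex, or the robber moves
onto a cop. -/
def Captured {α ι : Type*} (cops : ℕ → ι → α) (rob : ℕ → α) : Prop :=
  ∃ t, ∃ i, cops t i = rob t ∨ cops t i = rob (t + 1)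

/-- From the position with cops at `c₀`, robber at `r₀` and the robber to
move (cops stepping lazily along `A`, robber stepping along `R`), the cops can
guarantee `Goal` (a predicate of the resulting cop and robber trajectories). -/
def EnsureFrom {α ι : Type*} (A R : α → α → Prop) (c₀ : ι → α) (r₀ : α)
    (Goal : (ℕ → ι → α) → (ℕ → α) → Prop) : Prop :=
  ∃ σ : List α → ι → α,
    ∀ rob : ℕ → α, rob 0 = r₀ → (∀ t, R (rob t) (rob (t + 1))) →
      (∀ t i, Step A (copsFrom σ c₀ rob t i) (copsFrom σ c₀ rob (t + 1) i)) ∧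
      Goal (copsFrom σ c₀ rob) rob

/-- The robber is captured in the game where the cops move first. -/
def CapturedG {α ι : Type*} (cops : ℕ → ι → α) (rob : ℕ → α) : Prop :=
  ∃ t, ∃ i, cops t i = rob t ∨ cops (t + 1) i = rob t

/-- In the game on the digraph `A` (cops choose their starting vertices first,
robber steps along `R`), `k` cops can guarantee `Goal`. -/
def EnsureGame {α : Type*} (A R : α → α → Prop) (k : ℕ)
    (Goal : (ℕ → Fin k → α) → (ℕ → α) → Prop) : Prop :=
  ∃ σ : List α → Fin k → α,
    ∀ rob : ℕ → α, (∀ t, R (rob t) (rob (t + 1))) →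
      (∀ t i, Step A (playCops σ rob t i) (playCops σ rob (t + 1) i)) ∧
      Goal (playCops σ rob) rob

/-- `u` can reach `v` in at most `m` (lazy) moves along the digraph `A`. -/
def ReachIn {α : Type*} (A : α → α → Prop) (m : ℕ) (u v : α) : Prop :=
  ∃ f : ℕ → α, f 0 = u ∧ f m = v ∧ ∀ t, t < m → Step A (f t) (f (t + 1))

/-! ## The toroidal grid `Cₙ □ Cₙ` with a straight-ahead orientation. -/

/-- Vertices of the toroidal grid. -/
abbrev Vtx (n : ℕ) := ZMod n × ZMod n

/-- `a` is `1` or `-1`. -/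
def PM (a : ℤ) : Prop := a = 1 ∨ a = -1

/-- The straight-ahead orientation of `Cₙ □ Cₙ` determined by `δ, ε`:
the out-neighbours of `(x, y)` are `(x + δ y, y)` and `(x, y + ε x)`. -/
def Adj {n : ℕ} (δ ε : ZMod n → ℤ) (p q : Vtx n) : Prop :=
  (q.1 = p.1 + (δ p.2 : ZMod n) ∧ q.2 = p.2) ∨
  (q.1 = p.1 ∧ q.2 = p.2 + (ε p.1 : ZMod n))

/-- The out-neighbour of `p` along its column (the first coordinate moves). -/
def vOut {n : ℕ} (δ : ZMod n → ℤ) (p : Vtx n) : Vtx n :=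
  (p.1 + (δ p.2 : ZMod n), p.2)

/-- The out-neighbour of `p` along its row (the second coordinate moves). -/
def hOut {n : ℕ} (ε : ZMod n → ℤ) (p : Vtx n) : Vtx n :=
  (p.1, p.2 + (ε p.1 : ZMod n))

/-- The type `τ(p) = (δ y, ε x)` of a vertex `p = (x, y)`. -/
def ty {n : ℕ} (δ ε : ZMod n → ℤ) (p : Vtx n) : ℤ × ℤ := (δ p.2, ε p.1)

/-- The direction `u - w` of the main diagonal of a vertex. -/
def mdDir {n : ℕ} (δ ε : ZMod n → ℤ) (p : Vtx n) : ℤ × ℤ := (δ p.2, -(ε p.1))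

/-- The secondary diagonal `SD(p) = {p + r·τ(p) : r ∈ ℤ}`. -/
def SD {n : ℕ} (δ ε : ZMod n → ℤ) (p : Vtx n) : Set (Vtx n) :=
  {q | ∃ r : ℤ, q.1 = p.1 + ((r * δ p.2 : ℤ) : ZMod n) ∧
                q.2 = p.2 + ((r * ε p.1 : ℤ) : ZMod n)}

/-- The main diagonal `MD(p) = {p + r·(u - w) : r ∈ ℤ}` where `u, w` are the
out-neighbours of `p`. -/
def MD {n : ℕ} (δ ε : ZMod n → ℤ) (p : Vtx n) : Set (Vtx n) :=
  {q | ∃ r : ℤ, q.1 = p.1 + ((r * δ p.2 : ℤ) : ZMod n) ∧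
                q.2 = p.2 - ((r * ε p.1 : ℤ) : ZMod n)}

/-- An element of `{1, -1}² ⊆ ℤ²`. -/
def IsType (d : ℤ × ℤ) : Prop := (d.1 = 1 ∨ d.1 = -1) ∧ (d.2 = 1 ∨ d.2 = -1)

/-- Orthogonality in `ℤ²`. -/
def Orth (a b : ℤ × ℤ) : Prop := a.1 * b.1 + a.2 * b.2 = 0

/-! ### Streams -/

/-- A stream: a set of consecutive columns (`vert = true`, lines indexed by
the second coordinate, with constant `δ`) or consecutive rows (`vert = false`,
lines indexed by the first coordinate, with constant `ε`), all oriented in the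
same direction, starting at index `a` and of width `w`. -/
structure Strm (n : ℕ) (δ ε : ZMod n → ℤ) where
  vert : Bool
  a : ZMod n
  w : ℕ
  one_le : 1 ≤ w
  le_n : w ≤ n
  const : ∀ i : ℕ, i < w →
    (if vert then δ else ε) (a + (i : ZMod n)) = (if vert then δ else ε) a

namespace Strm

variable {n : ℕ} {δ ε : ZMod n → ℤ}

/-- The coordinate of a vertex indexing the lines of the stream's kind. -/
def proj (S : Strm n δ ε) (p : Vtx n) : ZMod n := if S.vert then p.2 else p.1

/-- The vertex set `V(S)` of a stream. -/
def verts (S : Strm n δ ε) : Set (Vtx n) :=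
  {p | ∃ i : ℕ, i < S.w ∧ S.proj p = S.a + (i : ZMod n)}

/-- The common direction of the lines of a stream. -/
def dir (S : Strm n δ ε) : ℤ := (if S.vert then δ else ε) S.a

/-- The stream is maximal: it cannot be extended by a line on either side. -/
def IsMax (S : Strm n δ ε) : Prop :=
  S.w = n ∨ ((if S.vert then δ else ε) (S.a - 1) ≠ (if S.vert then δ else ε) S.a ∧
             (if S.vert then δ else ε) (S.a + (S.w : ZMod n)) ≠ (if S.vert then δ else ε) S.a)

/-- The vertex of the line of the stream's kind with index `b` closest to `p`. -/
def cl (S : Strm n δ ε) (b : ZMod n) (p : Vtx n) : Vtx n :=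
  if S.vert then (p.1, b) else (b, p.2)

end Strm

/-- The largest width of a stream in the grid. -/
noncomputable def maxW (n : ℕ) (δ ε : ZMod n → ℤ) : ℕ :=
  sSup {w | ∃ S : Strm n δ ε, S.w = w}

/-- The vertices of the substream `S'` of `S` formed by the lines of `S` at
distance at least `m - 1` from its boundary lines, where `m = ⌊w(S)/3⌋ + 1`. -/
def innerVerts {n : ℕ} {δ ε : ZMod n → ℤ} (S : Strm n δ ε) : Set (Vtx n) :=
  {p | ∃ i : ℕ, S.w / 3 ≤ i ∧ i + S.w / 3 ≤ S.w - 1 ∧ S.proj p = S.a + (i : ZMod n)}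

/-- The cyclic distance between two elements of `ZMod n`. -/
def cdist {n : ℕ} (a b : ZMod n) : ℕ := min (b - a).val (a - b).val

/-! ### Confluxes, corners and guard posts -/

/-- Adjacency in the underlying (undirected) grid. -/
def UAdj {n : ℕ} (δ ε : ZMod n → ℤ) (p q : Vtx n) : Prop := Adj δ ε p q ∨ Adj δ ε q p

/-- Number of neighbours of `v` inside `K`. -/
noncomputable def nbrCount {n : ℕ} (δ ε : ZMod n → ℤ) (K : Set (Vtx n)) (v : Vtx n) : ℕ :=
  {u ∈ K | UAdj δ ε v u}.ncard

/-- Number of out-neighbours of `v` inside `K`. -/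
noncomputable def outCount {n : ℕ} (δ ε : ZMod n → ℤ) (K : Set (Vtx n)) (v : Vtx n) : ℕ :=
  {u ∈ K | Adj δ ε v u}.ncard

/-- A corner of `K`: a vertex of `K` with the minimum number of neighbours in `K`. -/
def Corner {n : ℕ} (δ ε : ZMod n → ℤ) (K : Set (Vtx n)) (v : Vtx n) : Prop :=
  v ∈ K ∧ ∀ u ∈ K, nbrCount δ ε K v ≤ nbrCount δ ε K u

/-- A main corner of `K`: when `K` has four corners, a corner with an odd
number of out-neighbours in `K`; when `K` has at most two corners, every
corner is main. -/
def MainCorner {n : ℕ} (δ ε : ZMod n → ℤ) (K : Set (Vtx n)) (v : Vtx n) : Prop :=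
  Corner δ ε K v ∧ ({u | Corner δ ε K u}.ncard ≤ 2 ∨ Odd (outCount δ ε K v))

/-- A secondary corner of `K` without out-neighbours in `K`. -/
def SecNoOut {n : ℕ} (δ ε : ZMod n → ℤ) (K : Set (Vtx n)) (v : Vtx n) : Prop :=
  Corner δ ε K v ∧ ¬ MainCorner δ ε K v ∧ ∀ u ∈ K, ¬ Adj δ ε v u

/-- The terminal corner of `K`: a corner with no out-neighbours in `K`. -/
def TermCorner {n : ℕ} (δ ε : ZMod n → ℤ) (K : Set (Vtx n)) (v : Vtx n) : Prop :=
  Corner δ ε K v ∧ ∀ u ∈ K, ¬ Adj δ ε v u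

/-- The vertical guard post of `K`: the vertical out-neighbour of the main
corner of `K` whose vertical edge leaves `K` (but no other edge leaves `K`,
unless `K` has only one vertex). -/
def IsVGuard {n : ℕ} (δ ε : ZMod n → ℤ) (K : Set (Vtx n)) (g : Vtx n) : Prop :=
  ∃ v, MainCorner δ ε K v ∧ vOut δ v ∉ K ∧ (K = {v} ∨ hOut ε v ∈ K) ∧ g = vOut δ v

/-- The horizontal guard post of `K`. -/
def IsHGuard {n : ℕ} (δ ε : ZMod n → ℤ) (K : Set (Vtx n)) (g : Vtx n) : Prop :=
  ∃ v, MainCorner δ ε K v ∧ hOut ε v ∉ K ∧ (K = {v} ∨ vOut δ v ∈ K) ∧ g = hOut ε v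

/-- The terminal guard post of a (maximal) conflux `K`: the vertex outside `K`
with the same out-neighbours as the terminal corner of `K`. -/
def IsTermGuard {n : ℕ} (δ ε : ZMod n → ℤ) (K : Set (Vtx n)) (g : Vtx n) : Prop :=
  g ∉ K ∧ ∃ c, TermCorner δ ε K c ∧
    ({vOut δ g, hOut ε g} : Set (Vtx n)) = {vOut δ c, hOut ε c}

/-- The number of steps needed to reach the boundary of `K` from `p`, moving
repeatedly by `st` (the boundary is reached when the next step exits `K`). -/
noncomputable def exitDist {n : ℕ} (K : Set (Vtx n)) (p : Vtx n) (st : ℤ × ℤ) : ℕ :=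
  sInf {m : ℕ |
    (p.1 + ((((m + 1 : ℕ) : ℤ) * st.1 : ℤ) : ZMod n),
     p.2 + ((((m + 1 : ℕ) : ℤ) * st.2 : ℤ) : ZMod n)) ∉ K}

/-! ### Maximal confluxes, escape distances and shadows -/

/-- `y` and `y'` index lines of the same maximal stream (for the direction
function `f`): `f` is constant on a cyclic interval containing both. -/
def SameBlock {n : ℕ} (f : ZMod n → ℤ) (y y' : ZMod n) : Prop :=
  (∃ m : ℕ, y' = y + (m : ZMod n) ∧ ∀ i : ℕ, i ≤ m → f (y + (i : ZMod n)) = f y) ∨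
  (∃ m : ℕ, y = y' + (m : ZMod n) ∧ ∀ i : ℕ, i ≤ m → f (y' + (i : ZMod n)) = f y')

/-- The maximal conflux containing `p`. -/
def maxConflux {n : ℕ} (δ ε : ZMod n → ℤ) (p : Vtx n) : Set (Vtx n) :=
  {q | SameBlock ε q.1 p.1 ∧ SameBlock δ q.2 p.2}

/-- The horizontal escape distance: the length of a shortest directed path
from `p` to a vertex outside its maximal conflux using only arcs that change
the first coordinate. -/
noncomputable def HE {n : ℕ} (δ ε : ZMod n → ℤ) (p : Vtx n) : ℕ :=
  sInf {m : ℕ | (p.1 + (((m : ℤ) * δ p.2 : ℤ) : ZMod n), p.2) ∉ maxConflux δ ε p}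

/-- The vertical escape distance. -/
noncomputable def VE {n : ℕ} (δ ε : ZMod n → ℤ) (p : Vtx n) : ℕ :=
  sInf {m : ℕ | (p.1, p.2 + (((m : ℤ) * ε p.1 : ℤ) : ZMod n)) ∉ maxConflux δ ε p}

/-- `w` is a main shadow of `v`. -/
def IsMainShadow {n : ℕ} (δ ε : ZMod n → ℤ) (v w : Vtx n) : Prop :=
  w ∈ MD δ ε v ∧ ty δ ε w = ty δ ε v ∧ VE δ ε v = HE δ ε w

/-- `w` is a secondary shadow of `v`. -/
def IsSecShadow {n : ℕ} (δ ε : ZMod n → ℤ) (v w : Vtx n) : Prop :=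
  w ∈ SD δ ε v ∧ ty δ ε w = -(ty δ ε v) ∧ VE δ ε v = HE δ ε w

/-- `w` is a diagonal shadow of `v`. -/
def IsDiagShadow {n : ℕ} (δ ε : ZMod n → ℤ) (v w : Vtx n) : Prop :=
  IsMainShadow δ ε v w ∨ IsSecShadow δ ε v w

/-! ### `k`-regular orientations and the conflux digraph -/

/-- `f` is, after the cyclic offset `c`, constant on consecutive blocks of `k`
indices with adjacent blocks taking opposite values in `{1, -1}`.  A
straight-ahead orientation is `k`-regularly oriented iff `2k ∣ n` and both `δ`
and `ε` satisfy this for some offset. -/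
def BlockAltAt {n : ℕ} (k : ℕ) (f : ZMod n → ℤ) (c : ZMod n) : Prop :=
  ∀ m : ℕ, f (c + (m : ZMod n)) = if m / k % 2 = 0 then 1 else -1

/-- The alternating direction function of the conflux digraph
(a 1-regularly oriented grid). -/
def altF (m : ℕ) : ZMod m → ℤ := fun q => if q.val % 2 = 0 then 1 else -1

/-- The index of the block (of length `k`, after offset `c`) containing `x`. -/
def blk {n : ℕ} (k : ℕ) (c x : ZMod n) : ZMod (n / k) :=
  (((x - c).val / k : ℕ) : ZMod (n / k))

/-- The projection sending a vertex of a `k`-regularly oriented grid to the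
vertex of the conflux digraph corresponding to its maximal conflux. -/
def confMap {n : ℕ} (k : ℕ) (cδ cε : ZMod n) (p : Vtx n) : Vtx (n / k) :=
  (blk k cε p.1, blk k cδ p.2)

/-- The translated main diagonal `MD_s(v, d) = {x : x - s·(τ(v)+d)/2 ∈ MD(v)}`. -/
def MDs {n : ℕ} (δ ε : ZMod n → ℤ) (s : ℕ) (v : Vtx n) (d : ℤ × ℤ) : Set (Vtx n) :=
  {x | (x.1 - (((s : ℤ) * (((ty δ ε v).1 + d.1) / 2) : ℤ) : ZMod n),
        x.2 - (((s : ℤ) * (((ty δ ε v).2 + d.2) / 2) : ℤ) : ZMod n)) ∈ MD δ ε v}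

/-- The diagonal distance `𝔡(u, v)` between vertices of opposite types. -/
noncomputable def ddist {n : ℕ} (δ ε : ZMod n → ℤ) (u v : Vtx n) : ℕ :=
  sInf {t : ℕ | ∃ d : ℤ × ℤ, IsType d ∧ Orth (ty δ ε u) d ∧ v ∈ MDs δ ε t u d}

/-- The set `B(u, v) = ⋃_{i ≤ 𝔡(u,v)} MD_i(u, d)`, where `d` is chosen so that
`v ∈ MD_{𝔡(u,v)}(u, d)`. -/
noncomputable def BSet {n : ℕ} (δ ε : ZMod n → ℤ) (u v : Vtx n) : Set (Vtx n) :=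
  {x | ∃ d : ℤ × ℤ, IsType d ∧ Orth (ty δ ε u) d ∧ v ∈ MDs δ ε (ddist δ ε u v) u d ∧
       ∃ i : ℕ, i ≤ ddist δ ε u v ∧ x ∈ MDs δ ε i u d}

/-! ### Mirrors -/

/-- The mirror of the diagonal shadow given by a robber at `v` and a cop at `c`:
the diagonal line through `(v₁, c₂)` with direction `d`. -/
def MirrorOf {n : ℕ} (v c : Vtx n) (d : ℤ × ℤ) : Set (Vtx n) :=
  {p | ∃ r : ℤ, p.1 = v.1 + ((r * d.1 : ℤ) : ZMod n) ∧ p.2 = c.2 + ((r * d.2 : ℤ) : ZMod n)}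

/-- Translation of a set of grid vertices by an integer vector. -/
def shiftSet {n : ℕ} (w : ℤ × ℤ) (L : Set (Vtx n)) : Set (Vtx n) :=
  (fun p : Vtx n => (p.1 + (w.1 : ZMod n), p.2 + (w.2 : ZMod n))) '' L



/-! ### Auxiliary lemmas for the proof -/


theorem no_strict_desc (f : ℕ → ℕ) (h : ∀ t, f (t+1) < f t) : False := by
  have key : ∀ t, f t + t ≤ f 0 := by
    intro t
    induction t with
    | zero => simp
    | succ t ih => have := h t; omega
  have := key (f 0 + 1); omega

theorem nat_up (k m N : ℕ) (hk : 1 ≤ k) (hm : 1 ≤ m) (hN : N < k * m) :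
    (N % k + 1 < k ∧ (N+1) % (k*m) / k = N/k ∧ (N+1) % (k*m) % k = N % k + 1)
    ∨ (N % k + 1 = k ∧ (N+1) % (k*m) / k = (N/k + 1) % m ∧ (N+1) % (k*m) % k = 0) := by
  have hRlt : N % k < k := Nat.mod_lt _ hk
  have hBm : N / k < m := Nat.div_lt_of_lt_mul (by omega)
  set B := N / k with hB
  set R := N % k with hR
  have hBR : N = B * k + R := by rw [hB, hR, mul_comm]; exact (Nat.div_add_mod N k).symm
  have hb1 : (B + 1) * k = B * k + k := by ring
  have hmk : k * m = m * k := mul_comm k m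
  have hmk1 : m * k = (m - 1) * k + k := by
    have h : m - 1 + 1 = m := by omega
    calc m * k = (m - 1 + 1) * k := by rw [h]
    _ = (m-1)*k + k := by ring
  have hBmk : B * k ≤ (m-1) * k := Nat.mul_le_mul_right k (by omega)
  rcases Nat.lt_or_ge (R + 1) k with h1 | h1
  · left
    have hlt : N + 1 < k * m := by omega
    rw [Nat.mod_eq_of_lt hlt]
    have hform : N + 1 = (R + 1) + B * k := by omega
    refine ⟨h1, ?_, ?_⟩
    · rw [hform, Nat.add_mul_div_right _ _ hk, Nat.div_eq_of_lt h1]; omega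
    · rw [hform, Nat.add_mul_mod_self_right, Nat.mod_eq_of_lt h1]
  · have hRk : R + 1 = k := by omega
    have hN1 : N + 1 = (B + 1) * k := by omega
    right
    rcases Nat.lt_or_ge (B + 1) m with h2 | h2
    · have hlt : N + 1 < k * m := by
        have : (B+1) * k < m * k := (Nat.mul_lt_mul_right (by omega)).mpr h2
        omega
      rw [Nat.mod_eq_of_lt hlt]
      refine ⟨hRk, ?_, ?_⟩
      · rw [hN1, Nat.mul_div_cancel _ (by omega), Nat.mod_eq_of_lt h2]
      · rw [hN1, Nat.mul_mod_left]
    · have hB2 : B + 1 = m := by omega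
      have hNe : N + 1 = k * m := by
        rw [hN1, hB2, hmk]
      rw [hNe, Nat.mod_self]
      refine ⟨hRk, ?_, ?_⟩
      · rw [Nat.zero_div, hB2, Nat.mod_self]
      · simp

theorem nat_down (k m N : ℕ) (hk : 1 ≤ k) (hm : 1 ≤ m) (hN : N < k * m) :
    (1 ≤ N % k ∧ (N + (k*m - 1)) % (k*m) / k = N/k ∧ (N + (k*m - 1)) % (k*m) % k = N % k - 1)
    ∨ (N % k = 0 ∧ (N + (k*m - 1)) % (k*m) / k = (N/k + (m-1)) % m ∧ (N + (k*m - 1)) % (k*m) % k = k - 1) := by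
  have hRlt : N % k < k := Nat.mod_lt _ hk
  have hBm : N / k < m := Nat.div_lt_of_lt_mul (by omega)
  set B := N / k with hB
  set R := N % k with hR
  have hBR : N = B * k + R := by rw [hB, hR, mul_comm]; exact (Nat.div_add_mod N k).symm
  have hmk : k * m = m * k := mul_comm k m
  have hmk1 : m * k = (m - 1) * k + k := by
    have h : m - 1 + 1 = m := by omega
    calc m * k = (m - 1 + 1) * k := by rw [h]
    _ = (m-1)*k + k := by ring
  have hBmk : B * k ≤ (m-1) * k := Nat.mul_le_mul_right k (by omega)
  rcases Nat.lt_or_ge 0 R with h1 | h1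
  · left
    have hN0 : 0 < N := by omega
    have hmodval : (N + (k*m - 1)) % (k*m) = N - 1 := by
      have h : N + (k*m - 1) = k*m + (N - 1) := by omega
      rw [h, Nat.add_mod_left, Nat.mod_eq_of_lt (by omega)]
    rw [hmodval]
    have hform : N - 1 = (R - 1) + B * k := by omega
    refine ⟨h1, ?_, ?_⟩
    · rw [hform, Nat.add_mul_div_right _ _ hk, Nat.div_eq_of_lt (by omega)]; omega
    · rw [hform, Nat.add_mul_mod_self_right, Nat.mod_eq_of_lt (by omega)]
  · have hR0 : R = 0 := by omega
    right
    rcases Nat.eq_zero_or_pos B with h2 | h2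
    · have hBk0 : B * k = 0 := by rw [h2, Nat.zero_mul]
      have hN0 : N = 0 := by omega
      have hmodval : (N + (k*m - 1)) % (k*m) = k*m - 1 := by
        rw [hN0, Nat.zero_add, Nat.mod_eq_of_lt (by omega)]
      rw [hmodval]
      have hform : k*m - 1 = (k - 1) + (m-1) * k := by omega
      refine ⟨hR0, ?_, ?_⟩
      · have hmm0 : (0 + (m-1)) % m = m - 1 := by
          rw [Nat.zero_add, Nat.mod_eq_of_lt (by omega)]
        rw [hform, Nat.add_mul_div_right _ _ hk, Nat.div_eq_of_lt (by omega), h2, hmm0]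
        omega
      · rw [hform, Nat.add_mul_mod_self_right, Nat.mod_eq_of_lt (by omega)]
    · have hN0 : 0 < N := by
        rcases Nat.eq_zero_or_pos N with h | h
        · exfalso; rw [h] at hB; simp at hB; omega
        · exact h
      have hmodval : (N + (k*m - 1)) % (k*m) = N - 1 := by
        have h : N + (k*m - 1) = k*m + (N - 1) := by omega
        rw [h, Nat.add_mod_left, Nat.mod_eq_of_lt (by omega)]
      rw [hmodval]
      have hBk : B * k = (B-1)*k + k := by
        have h : B - 1 + 1 = B := by omega
        calc B * k = (B-1+1)*k := by rw [h]
        _ = (B-1)*k + k := by ring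
      have hform : N - 1 = (k - 1) + (B-1) * k := by omega
      have hmm : (B + (m-1)) % m = B - 1 := by
        have h : B + (m-1) = (B-1) + m := by omega
        rw [h, Nat.add_mod_right, Nat.mod_eq_of_lt (by omega)]
      refine ⟨hR0, ?_, ?_⟩
      · rw [hform, Nat.add_mul_div_right _ _ hk, Nat.div_eq_of_lt (by omega), hmm]; omega
      · rw [hform, Nat.add_mul_mod_self_right, Nat.mod_eq_of_lt (by omega)]

theorem half_sum {a b d₁ d₂ : ℤ} (ha : a = 1 ∨ a = -1) (hb : b = 1 ∨ b = -1)
    (hd₁ : d₁ = 1 ∨ d₁ = -1) (hd₂ : d₂ = 1 ∨ d₂ = -1)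
    (horth : a * d₁ + b * d₂ = 0) :
    b * ((a + d₁) / 2) + a * ((b + d₂) / 2) = a * b := by
  rcases ha with rfl | rfl <;> rcases hb with rfl | rfl <;>
    rcases hd₁ with rfl | rfl <;> rcases hd₂ with rfl | rfl <;> revert horth <;> norm_num

theorem level_of_MDs {m : ℕ} (δ' ε' : ZMod m → ℤ) (u : Vtx m) {a b : ℤ}
    (hA : a = 1 ∨ a = -1) (hB : b = 1 ∨ b = -1)
    (ha : δ' u.2 = a) (hb : ε' u.1 = b)
    (i : ℕ) (d : ℤ × ℤ) (hd : IsType d) (ho : Orth (ty δ' ε' u) d)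
    {x : Vtx m} (hx : x ∈ MDs δ' ε' i u d) :
    ((b : ℤ) : ZMod m) * x.1 + ((a : ℤ) : ZMod m) * x.2
      = ((b : ℤ) : ZMod m) * u.1 + ((a : ℤ) : ZMod m) * u.2
        + (((i : ℤ) * (a * b) : ℤ) : ZMod m) := by
  obtain ⟨r, h1, h2⟩ := hx
  simp only [ty, MDs, Set.mem_setOf_eq] at h1 h2 ho
  simp only [ha, hb] at h1 h2 ho
  have hs : b * ((a + d.1) / 2) + a * ((b + d.2) / 2) = a * b :=
    half_sum hA hB hd.1 hd.2 ho
  set D1 : ℤ := (a + d.1) / 2 with hD1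
  set D2 : ℤ := (b + d.2) / 2 with hD2
  have e1 : x.1 = u.1 + ((r * a : ℤ) : ZMod m) + (((i : ℤ) * D1 : ℤ) : ZMod m) :=
    sub_eq_iff_eq_add.mp h1
  have e2 : x.2 = u.2 - ((r * b : ℤ) : ZMod m) + (((i : ℤ) * D2 : ℤ) : ZMod m) :=
    sub_eq_iff_eq_add.mp h2
  have hs' : ((b * D1 + a * D2 : ℤ) : ZMod m) = ((a * b : ℤ) : ZMod m) := by rw [hs]
  rw [e1, e2]
  push_cast at hs' ⊢
  linear_combination (i : ZMod m) * hs'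

theorem bset_level {m : ℕ} (u v : Vtx m) {a b : ℤ}
    (hA : a = 1 ∨ a = -1) (hB : b = 1 ∨ b = -1)
    (ha : altF m u.2 = a) (hb : altF m u.1 = b)
    {x : Vtx m} (hx : x ∈ BSet (altF m) (altF m) u v) :
    ∃ i : ℕ, i ≤ ddist (altF m) (altF m) u v ∧
      ((b : ℤ) : ZMod m) * x.1 + ((a : ℤ) : ZMod m) * x.2
      = ((b : ℤ) : ZMod m) * u.1 + ((a : ℤ) : ZMod m) * u.2
        + (((i : ℤ) * (a * b) : ℤ) : ZMod m) := by
  obtain ⟨d, hd, ho, _hv, i, hi, hxi⟩ := hx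
  exact ⟨i, hi, level_of_MDs _ _ u hA hB ha hb i d hd ho hxi⟩

theorem four_le {m : ℕ} (h2 : 2 ∣ m) (h0 : m ≠ 0) (P₁ P₂ : Vtx m)
    (hτ : ty (altF m) (altF m) P₁ = -(ty (altF m) (altF m) P₂))
    (hdd : ddist (altF m) (altF m) P₁ P₂ = 2) : 4 ≤ m := by
  by_contra h
  have hm2 : m = 2 := by omega
  subst hm2
  have ht1 : altF 2 P₁.2 = -(altF 2 P₂.2) := congrArg Prod.fst hτ
  have ht2 : altF 2 P₁.1 = -(altF 2 P₂.1) := congrArg Prod.snd hτ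
  have hop : ∀ x y : ZMod 2, altF 2 x = -(altF 2 y) → y = x + 1 := by decide
  have hcast : ∀ z : ℤ, z = 1 ∨ z = -1 → ((z : ℤ) : ZMod 2) = 1 := by
    intro z hz; rcases hz with rfl | rfl <;> decide
  have hpm : ∀ x : ZMod 2, altF 2 x = 1 ∨ altF 2 x = -1 := by decide
  have h0mem : (0 : ℕ) ∈ {t : ℕ | ∃ d : ℤ × ℤ, IsType d ∧
      Orth (ty (altF 2) (altF 2) P₁) d ∧ P₂ ∈ MDs (altF 2) (altF 2) t P₁ d} := by
    refine ⟨(altF 2 P₁.1, -(altF 2 P₁.2)), ⟨hpm P₁.1, ?_⟩, ?_, ?_⟩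
    · rcases hpm P₁.2 with hv | hv <;> rw [hv] <;> norm_num
    · show altF 2 P₁.2 * altF 2 P₁.1 + altF 2 P₁.1 * -(altF 2 P₁.2) = 0
      ring
    · show (P₂.1 - _, P₂.2 - _) ∈ MD (altF 2) (altF 2) P₁
      refine ⟨1, ?_, ?_⟩ <;>
        simp only [Nat.cast_zero, zero_mul, Int.cast_zero, sub_zero, one_mul]
      · rw [hcast _ (hpm P₁.2)]
        exact hop _ _ ht2
      · have hsub : ∀ x y : ZMod 2, y = x + 1 → y = x - 1 := by decide
        rw [hcast _ (hpm P₁.1)]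
        exact hsub _ _ (hop _ _ ht1)
  have hle : ddist (altF 2) (altF 2) P₁ P₂ ≤ 0 := Nat.sInf_le h0mem
  omega


theorem dir_eq {n k : ℕ} [NeZero n] {f : ZMod n → ℤ} {c : ZMod n}
    (hf : BlockAltAt k f c) (y : ZMod n) :
    f y = if ((y - c).val / k) % 2 = 0 then 1 else -1 := by
  have h := hf ((y - c).val)
  have hv : (((y - c).val : ℕ) : ZMod n) = y - c := ZMod.natCast_rightInverse _
  rw [hv] at h
  rw [← h]
  congr 1
  rw [add_comm, sub_add_cancel]

theorem parity_flip_up {m B : ℕ} (hme : 2 ∣ m) (hB : B < m) :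
    ((B + 1) % m) % 2 ≠ B % 2 := by
  rcases Nat.lt_or_ge (B + 1) m with h | h
  · rw [Nat.mod_eq_of_lt h]; omega
  · have h2 : B + 1 = m := by omega
    rw [h2, Nat.mod_self]; omega

theorem parity_flip_down {m B : ℕ} (hme : 2 ∣ m) (hB : B < m) :
    ((B + (m - 1)) % m) % 2 ≠ B % 2 := by
  rcases Nat.eq_zero_or_pos B with h | h
  · subst h
    have h2 : (0 + (m-1)) % m = m - 1 := by
      rw [Nat.zero_add]; exact Nat.mod_eq_of_lt (by omega)
    rw [h2]; omega
  · have h2 : (B + (m - 1)) % m = B - 1 := by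
      have h3 : B + (m - 1) = (B - 1) + m := by omega
      rw [h3, Nat.add_mod_right]; exact Nat.mod_eq_of_lt (by omega)
    rw [h2]; omega

theorem coord_step (n k : ℕ) (hk : 2 ≤ k) (hm1 : 1 ≤ n/k) (hme : 2 ∣ n/k)
    (hn : n = k * (n/k)) (c : ZMod n) (x x' : ZMod n) (d : ℤ)
    (hd1 : d = 1 ∨ d = -1)
    (hx' : x' = x + (d : ZMod n)) :
    ( (x' - c).val / k = (x - c).val / k ∧
      (if d = 1 then (x' - c).val % k else k - 1 - (x' - c).val % k)
        = (if d = 1 then (x - c).val % k else k - 1 - (x - c).val % k) + 1 )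
    ∨ ( ((((x' - c).val / k : ℕ)) : ZMod (n/k))
          = (((x - c).val / k : ℕ) : ZMod (n/k)) + ((d : ℤ) : ZMod (n/k))
        ∧ ((x' - c).val / k) % 2 ≠ ((x - c).val / k) % 2 ) := by
  set m := n / k with hmdef
  haveI : NeZero n := ⟨by
    have := Nat.mul_le_mul hk hm1
    omega⟩
  haveI : Fact (1 < n) := ⟨by
    have := Nat.mul_le_mul hk hm1
    omega⟩
  have hNlt : (x - c).val < k * m := by rw [← hn]; exact ZMod.val_lt _
  have hBlt : (x - c).val / k < m := Nat.div_lt_of_lt_mul hNlt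
  rcases hd1 with hd1 | hd1
  · -- moving up
    have hxc : x' - c = (x - c) + 1 := by rw [hx', hd1]; push_cast; ring
    have hval : (x' - c).val = ((x - c).val + 1) % n := by
      rw [hxc, ZMod.val_add, ZMod.val_one]
    have hkm : k * m = n := hn.symm
    rcases nat_up k m ((x - c).val) (by omega) hm1 hNlt with ⟨h1, h2, h3⟩ | ⟨h1, h2, h3⟩ <;>
      rw [hkm] at h2 h3
    · left
      constructor
      · rw [hval, h2]
      · rw [hval, h3, if_pos hd1, if_pos hd1]
    · right
      constructor
      · rw [hval, h2, ZMod.natCast_mod, hd1]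
        push_cast; ring
      · rw [hval, h2]
        exact parity_flip_up hme hBlt
  · -- moving down
    have hneg : ((n - 1 : ℕ) : ZMod n) = -1 := by
      rw [Nat.cast_sub (by omega), ZMod.natCast_self]; push_cast; ring
    have hxc : x' - c = (x - c) + ((n - 1 : ℕ) : ZMod n) := by
      rw [hx', hd1, hneg]; push_cast; ring
    have hval : (x' - c).val = ((x - c).val + (n - 1)) % n := by
      rw [hxc, ZMod.val_add, ZMod.val_cast_of_lt (by omega)]
    have hkm : k * m = n := hn.symm
    have hkm1 : k * m - 1 = n - 1 := by omega
    rcases nat_down k m ((x - c).val) (by omega) hm1 hNlt with ⟨h1, h2, h3⟩ | ⟨h1, h2, h3⟩ <;>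
      rw [hkm1, hkm] at h2 h3
    · left
      have hd1' : ¬ (d = 1) := by rw [hd1]; norm_num
      have hRlt : (x - c).val % k < k := Nat.mod_lt _ (by omega)
      constructor
      · rw [hval, h2]
      · rw [hval, h3, if_neg hd1', if_neg hd1']
        omega
    · right
      have hm1' : ((m - 1 : ℕ) : ZMod m) = -1 := by
        rw [Nat.cast_sub (by omega), ZMod.natCast_self]; push_cast; ring
      constructor
      · rw [hval, h2, ZMod.natCast_mod, hd1]
        push_cast [hm1']
        ring
      · rw [hval, h2]
        exact parity_flip_down hme hBlt

def Phi {n : ℕ} (k : ℕ) (δ ε : ZMod n → ℤ) (cδ cε : ZMod n) (p : Vtx n) : ℕ :=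
  (if δ p.2 = 1 then (p.1 - cε).val % k else k - 1 - (p.1 - cε).val % k) +
  (if ε p.1 = 1 then (p.2 - cδ).val % k else k - 1 - (p.2 - cδ).val % k)

theorem phi_bound {n : ℕ} [NeZero n] (k : ℕ) (hk : 1 ≤ k)
    (δ ε : ZMod n → ℤ) (cδ cε : ZMod n) (p : Vtx n) :
    Phi k δ ε cδ cε p ≤ 2*k - 2 := by
  have h1 := Nat.mod_lt ((p.1 - cε).val) (show 0 < k by omega)
  have h2 := Nat.mod_lt ((p.2 - cδ).val) (show 0 < k by omega)
  unfold Phi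
  split <;> split <;> omega

theorem grid_step (n k : ℕ) (hk : 2 ≤ k) (hm1 : 1 ≤ n/k) (hme : 2 ∣ n/k)
    (hn : n = k * (n/k)) (δ ε : ZMod n → ℤ) (cδ cε : ZMod n)
    (hδ : BlockAltAt k δ cδ) (hε : BlockAltAt k ε cε)
    (p q : Vtx n) (hpq : Adj δ ε p q) :
    ( (q.1 - cε).val / k = (p.1 - cε).val / k ∧ (q.2 - cδ).val / k = (p.2 - cδ).val / k
      ∧ Phi k δ ε cδ cε q = Phi k δ ε cδ cε p + 1 )
    ∨ ( (((q.1 - cε).val / k : ℕ) : ZMod (n/k))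
          = (((p.1 - cε).val / k : ℕ) : ZMod (n/k)) + ((δ p.2 : ℤ) : ZMod (n/k))
        ∧ (q.2 - cδ).val / k = (p.2 - cδ).val / k
        ∧ δ q.2 = δ p.2 ∧ ε q.1 = -ε p.1 )
    ∨ ( (((q.2 - cδ).val / k : ℕ) : ZMod (n/k))
          = (((p.2 - cδ).val / k : ℕ) : ZMod (n/k)) + ((ε p.1 : ℤ) : ZMod (n/k))
        ∧ (q.1 - cε).val / k = (p.1 - cε).val / k
        ∧ ε q.1 = ε p.1 ∧ δ q.2 = -δ p.2 ) := by
  haveI : NeZero n := ⟨by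
    have := Nat.mul_le_mul hk hm1
    omega⟩
  have hpmδ : δ p.2 = 1 ∨ δ p.2 = -1 := by rw [dir_eq hδ]; split <;> simp
  have hpmε : ε p.1 = 1 ∨ ε p.1 = -1 := by rw [dir_eq hε]; split <;> simp
  rcases hpq with ⟨hq1, hq2⟩ | ⟨hq1, hq2⟩
  · -- horizontal move
    rcases coord_step n k hk hm1 hme hn cε p.1 q.1 (δ p.2) hpmδ hq1 with
      ⟨hB, hR⟩ | ⟨hZ, hpar⟩
    · left
      refine ⟨hB, by rw [hq2], ?_⟩
      show (if δ q.2 = 1 then _ else _) + (if ε q.1 = 1 then _ else _) = _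
      rw [hq2]
      have hεeq : ε q.1 = ε p.1 := by
        rw [dir_eq hε, dir_eq hε, hB]
      rw [hεeq]
      show _ + (if ε p.1 = 1 then (p.2 - cδ).val % k else k - 1 - (p.2 - cδ).val % k)
        = (if δ p.2 = 1 then _ else _) + (if ε p.1 = 1 then _ else _) + 1
      omega
    · right; left
      have hεeq : ε q.1 = -ε p.1 := by
        rw [dir_eq hε, dir_eq hε]
        rcases Nat.mod_two_eq_zero_or_one ((p.1 - cε).val / k) with h | h
        · have hq0 : ¬((q.1 - cε).val / k % 2 = 0) := by omega
          rw [if_pos h, if_neg hq0]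
        · have hq0 : (q.1 - cε).val / k % 2 = 0 := by omega
          have hp0 : ¬((p.1 - cε).val / k % 2 = 0) := by omega
          rw [if_neg hp0, if_pos hq0]; norm_num
      exact ⟨hZ, by rw [hq2], by rw [hq2], hεeq⟩
  · -- vertical move
    rcases coord_step n k hk hm1 hme hn cδ p.2 q.2 (ε p.1) hpmε hq2 with
      ⟨hB, hR⟩ | ⟨hZ, hpar⟩
    · left
      refine ⟨by rw [hq1], hB, ?_⟩
      show (if δ q.2 = 1 then _ else _) + (if ε q.1 = 1 then _ else _) = _
      rw [hq1]
      have hδeq : δ q.2 = δ p.2 := by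
        rw [dir_eq hδ, dir_eq hδ, hB]
      rw [hδeq]
      show (if δ p.2 = 1 then (p.1 - cε).val % k else k - 1 - (p.1 - cε).val % k) + _
        = (if δ p.2 = 1 then _ else _) + (if ε p.1 = 1 then _ else _) + 1
      omega
    · right; right
      have hδeq : δ q.2 = -δ p.2 := by
        rw [dir_eq hδ, dir_eq hδ]
        rcases Nat.mod_two_eq_zero_or_one ((p.2 - cδ).val / k) with h | h
        · have hq0 : ¬((q.2 - cδ).val / k % 2 = 0) := by omega
          rw [if_pos h, if_neg hq0]
        · have hq0 : (q.2 - cδ).val / k % 2 = 0 := by omega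
          have hp0 : ¬((p.2 - cδ).val / k % 2 = 0) := by omega
          rw [if_neg hp0, if_pos hq0]; norm_num
      exact ⟨hZ, by rw [hq1], by rw [hq1], hδeq⟩


def Rst (I : ℕ) (A : ℤ) : ℕ :=
  if I = 1 then 2 else if A = (if I = 0 then 1 else -1) then 3 else 1

theorem state_step {I I' : ℕ} {A A' D : ℤ} (hI : I ≤ 2) (hI' : I' ≤ 2)
    (hA : A = 1 ∨ A = -1)
    (heq : (I' : ℤ) = I + D)
    (hD : (D = A ∧ A' = A) ∨
      (A * D = (if I % 2 = 0 then 1 else -1) ∧ A' = -A ∧ (D = 1 ∨ D = -1))) :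
    Rst I' A' < Rst I A := by
  interval_cases I <;> interval_cases I' <;>
    rcases hA with rfl | rfl <;>
    rcases hD with ⟨rfl, rfl⟩ | ⟨h1, rfl, h2 | h2⟩ <;>
    simp_all [Rst]

theorem zmod_cancel {m : ℕ} [NeZero m] {s c : ℤ} (hs : s = 1 ∨ s = -1)
    (h : (c : ZMod m) * ((s : ℤ) : ZMod m) = 0) (hc : |c| < m) : c = 0 := by
  have h0 : ((c : ZMod m)) = 0 := by
    rcases hs with rfl | rfl
    · simpa using h
    · have h1 : ((-1 : ℤ) : ZMod m) = -1 := by push_cast; ring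
      rw [h1, mul_neg_one, neg_eq_zero] at h
      exact h
  have := (ZMod.intCast_zmod_eq_zero_iff_dvd c m).mp h0
  exact Int.eq_zero_of_abs_lt_dvd this hc

theorem prod_sign {a b dv ev : ℤ} {BX BY i : ℕ}
    (hA : a = 1 ∨ a = -1) (hB : b = 1 ∨ b = -1)
    (hdv : dv = if BY % 2 = 0 then 1 else -1) (hev : ev = if BX % 2 = 0 then 1 else -1)
    (hp : (BX + BY) % 2 = ((if a * b = 1 then 0 else 1) + i) % 2) :
    (a * dv) * (b * ev) = if i % 2 = 0 then 1 else -1 := by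
  subst hdv hev
  rcases hA with rfl | rfl <;> rcases hB with rfl | rfl <;>
  rcases Nat.mod_two_eq_zero_or_one BX with h1 | h1 <;>
  rcases Nat.mod_two_eq_zero_or_one BY with h2 | h2 <;>
  rcases Nat.mod_two_eq_zero_or_one i with h3 | h3 <;>
  simp [h1, h2, h3] at hp ⊢ <;> omega

theorem escape (n k : ℕ) (hk : 2 ≤ k) (hm4 : 4 ≤ n / k) (hme : 2 ∣ n / k)
    (hn : n = k * (n / k))
    (δ ε : ZMod n → ℤ) (cδ cε : ZMod n)
    (hδ : BlockAltAt k δ cδ) (hε : BlockAltAt k ε cε)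
    (a b : ℤ) (hA : a = 1 ∨ a = -1) (hB : b = 1 ∨ b = -1)
    (L0 : ZMod (n / k))
    (hL0 : (ZMod.castHom hme (ZMod 2)) L0 = ((if a * b = 1 then 0 else 1 : ℕ) : ZMod 2))
    (rob : ℕ → Vtx n) (hrob : ∀ t, Adj δ ε (rob t) (rob (t + 1)))
    (H : ∀ t, ∃ i : ℕ, i ≤ 2 ∧
      ((b : ℤ) : ZMod (n / k)) * ((((rob t).1 - cε).val / k : ℕ) : ZMod (n / k))
        + ((a : ℤ) : ZMod (n / k)) * ((((rob t).2 - cδ).val / k : ℕ) : ZMod (n / k))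
      = L0 + (((i : ℤ) * (a * b) : ℤ) : ZMod (n / k))) :
    False := by
  have hm1 : 1 ≤ n / k := by omega
  haveI : NeZero n := ⟨by have := Nat.mul_le_mul hk hm1; omega⟩
  haveI : NeZero (n / k) := ⟨by omega⟩
  choose I hIle hIeq using H
  have hab : a * b = 1 ∨ a * b = -1 := by
    rcases hA with rfl | rfl <;> rcases hB with rfl | rfl <;> norm_num
  have hcancel : ∀ c : ℤ, |c| < ((n / k : ℕ) : ℤ) →
      ((c : ZMod (n / k)) * ((a * b : ℤ) : ZMod (n / k)) = 0) → c = 0 := by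
    intro c hc h; exact zmod_cancel hab h hc
  -- parity facts
  have hparity : ∀ t, (((rob t).1 - cε).val / k + ((rob t).2 - cδ).val / k) % 2
      = ((if a * b = 1 then 0 else 1) + I t) % 2 := by
    intro t
    have h := congrArg (ZMod.castHom hme (ZMod 2)) (hIeq t)
    rw [map_add, map_add, map_mul, map_mul, map_intCast, map_intCast,
      map_natCast, map_natCast, map_intCast, hL0] at h
    have hb2 : ((b : ℤ) : ZMod 2) = 1 := by rcases hB with rfl | rfl <;> decide
    have ha2 : ((a : ℤ) : ZMod 2) = 1 := by rcases hA with rfl | rfl <;> decide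
    have habs2 : (((I t : ℤ) * (a * b) : ℤ) : ZMod 2) = ((I t : ℕ) : ZMod 2) := by
      rcases hab with h' | h'
      · rw [h', mul_one]; push_cast; ring
      · rw [h']
        have hneg : ∀ z : ZMod 2, -z = z := by decide
        push_cast
        rw [mul_neg, mul_one, hneg]
    rw [hb2, ha2, habs2, one_mul, one_mul] at h
    have h2 : (((((rob t).1 - cε).val / k + ((rob t).2 - cδ).val / k : ℕ)) : ZMod 2)
        = (((if a * b = 1 then 0 else 1) + I t : ℕ) : ZMod 2) := by
      rcases hab with h' | h'
      · rw [if_pos h'] at h ⊢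
        push_cast at h ⊢
        linear_combination h
      · rw [if_neg (show ¬(a*b = 1) by rw [h']; norm_num)] at h ⊢
        push_cast at h ⊢
        linear_combination h
    exact (ZMod.natCast_eq_natCast_iff _ _ 2).mp h2
  have hδval : ∀ y : ZMod n, δ y = if ((y - cδ).val / k) % 2 = 0 then 1 else -1 := dir_eq hδ
  have hεval : ∀ x : ZMod n, ε x = if ((x - cε).val / k) % 2 = 0 then 1 else -1 := dir_eq hε
  have hApm : ∀ t, a * δ ((rob t).2) = 1 ∨ a * δ ((rob t).2) = -1 := by
    intro t; rw [hδval]; rcases hA with rfl | rfl <;> split <;> norm_num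
  have hBpm : ∀ t, b * ε ((rob t).1) = 1 ∨ b * ε ((rob t).1) = -1 := by
    intro t; rw [hεval]; rcases hB with rfl | rfl <;> split <;> norm_num
  have hABval : ∀ t, (a * δ ((rob t).2)) * (b * ε ((rob t).1))
      = (if I t % 2 = 0 then 1 else -1) := by
    intro t
    exact prod_sign hA hB (hδval _) (hεval _) (hparity t)
  apply no_strict_desc
    (fun t => Rst (I t) (a * δ ((rob t).2)) * (2 * k)
      + (2 * k - 1 - Phi k δ ε cδ cε (rob t)))
  intro t
  have hphiq := phi_bound k (by omega) δ ε cδ cε (rob (t+1))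
  have hphip := phi_bound k (by omega) δ ε cδ cε (rob t)
  rcases grid_step n k hk (by omega) hme hn δ ε cδ cε hδ hε (rob t) (rob (t+1)) (hrob t) with
    ⟨hBx, hBy, hPhi⟩ | ⟨hZ, hBy, hδeq, hεeq⟩ | ⟨hZ, hBx, hεeq, hδeq⟩
  · -- no crossing
    have hIeq' : I (t+1) = I t := by
      have h1 := hIeq (t+1)
      rw [hBx, hBy, hIeq t] at h1
      have h3 : (((I (t+1) : ℤ) - (I t : ℤ) : ℤ) : ZMod (n / k))
          * ((a * b : ℤ) : ZMod (n / k)) = 0 := by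
        have h2 := add_left_cancel h1
        push_cast at h2 ⊢
        linear_combination -h2
      have hle1 := hIle t
      have hle2 := hIle (t+1)
      have h4 := hcancel _ (by rw [abs_lt]; push_cast; constructor <;> omega) h3
      omega
    have hδsame : δ ((rob (t+1)).2) = δ ((rob t).2) := by
      rw [hδval, hδval, hBy]
    rw [hIeq', hδsame, hPhi]
    omega
  · -- horizontal crossing
    have hIstep : (I (t+1) : ℤ) = I t + a * δ ((rob t).2) := by
      have h1 := hIeq (t+1)
      rw [hZ, hBy] at h1
      have h2 := hIeq t
      have h3 : (((I (t+1) : ℤ) - I t - a * δ ((rob t).2) : ℤ) : ZMod (n / k))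
          * ((a * b : ℤ) : ZMod (n / k)) = 0 := by
        rcases hA with rfl | rfl <;> push_cast at h1 h2 ⊢ <;>
          first
            | linear_combination h2 - h1
            | linear_combination h1 - h2
      have hle1 := hIle t
      have hle2 := hIle (t+1)
      have h4 := hcancel _ ?_ h3
      · linarith [h4]
      · rcases hApm t with h | h <;> rw [h] <;> rw [abs_lt] <;> push_cast <;>
          constructor <;> omega
    have hA' : a * δ ((rob (t+1)).2) = a * δ ((rob t).2) := by rw [hδeq]
    have hrst := state_step (hIle t) (hIle (t+1)) (hApm t) hIstep (Or.inl ⟨rfl, hA'⟩)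
    have hmul : Rst (I (t+1)) (a * δ ((rob (t+1)).2)) * (2*k) + (2*k)
        ≤ Rst (I t) (a * δ ((rob t).2)) * (2*k) := by
      have h5 : Rst (I (t+1)) (a * δ ((rob (t+1)).2)) + 1
          ≤ Rst (I t) (a * δ ((rob t).2)) := hrst
      calc Rst (I (t+1)) (a * δ ((rob (t+1)).2)) * (2*k) + (2*k)
          = (Rst (I (t+1)) (a * δ ((rob (t+1)).2)) + 1) * (2*k) := by ring
        _ ≤ Rst (I t) (a * δ ((rob t).2)) * (2*k) := Nat.mul_le_mul_right _ h5
    omega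
  · -- vertical crossing
    have hIstep : (I (t+1) : ℤ) = I t + b * ε ((rob t).1) := by
      have h1 := hIeq (t+1)
      rw [hZ, hBx] at h1
      have h2 := hIeq t
      have h3 : (((I (t+1) : ℤ) - I t - b * ε ((rob t).1) : ℤ) : ZMod (n / k))
          * ((a * b : ℤ) : ZMod (n / k)) = 0 := by
        rcases hB with rfl | rfl <;> push_cast at h1 h2 ⊢ <;>
          first
            | linear_combination h2 - h1
            | linear_combination h1 - h2
      have hle1 := hIle t
      have hle2 := hIle (t+1)
      have h4 := hcancel _ ?_ h3
      · linarith [h4]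
      · rcases hBpm t with h | h <;> rw [h] <;> rw [abs_lt] <;> push_cast <;>
          constructor <;> omega
    have hA' : a * δ ((rob (t+1)).2) = -(a * δ ((rob t).2)) := by rw [hδeq]; ring
    have hrst := state_step (hIle t) (hIle (t+1)) (hApm t) hIstep
      (Or.inr ⟨hABval t, hA', hBpm t⟩)
    have hmul : Rst (I (t+1)) (a * δ ((rob (t+1)).2)) * (2*k) + (2*k)
        ≤ Rst (I t) (a * δ ((rob t).2)) * (2*k) := by
      have h5 : Rst (I (t+1)) (a * δ ((rob (t+1)).2)) + 1
          ≤ Rst (I t) (a * δ ((rob t).2)) := hrst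
      calc Rst (I (t+1)) (a * δ ((rob (t+1)).2)) * (2*k) + (2*k)
          = (Rst (I (t+1)) (a * δ ((rob (t+1)).2)) + 1) * (2*k) := by ring
        _ ≤ Rst (I t) (a * δ ((rob t).2)) * (2*k) := Nat.mul_le_mul_right _ h5
    omega


theorem altF_pm {m : ℕ} (q : ZMod m) : altF m q = 1 ∨ altF m q = -1 := by
  unfold altF; split <;> simp

theorem L0_parity {m : ℕ} [NeZero m] (hme : 2 ∣ m) (P : Vtx m) :
    (ZMod.castHom hme (ZMod 2))
        (((altF m P.1 : ℤ) : ZMod m) * P.1 + ((altF m P.2 : ℤ) : ZMod m) * P.2)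
      = ((if (altF m P.2) * (altF m P.1) = 1 then 0 else 1 : ℕ) : ZMod 2) := by
  have hc : ∀ x : ZMod m, (ZMod.castHom hme (ZMod 2)) x = ((x.val : ℕ) : ZMod 2) := by
    intro x
    conv_lhs => rw [← ZMod.natCast_rightInverse x]
    rw [map_natCast]
  rw [map_add, map_mul, map_mul, map_intCast, map_intCast, hc P.1, hc P.2,
    ← ZMod.natCast_mod P.1.val 2, ← ZMod.natCast_mod P.2.val 2]
  rcases Nat.mod_two_eq_zero_or_one P.1.val with h1 | h1 <;>
  rcases Nat.mod_two_eq_zero_or_one P.2.val with h2 | h2 <;>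
  rw [h1, h2] <;> simp [altF, h1, h2] <;> norm_num <;> decide


/-- (Lemma `land1`.)  In the forced-move game on a
`k`-regularly oriented grid, let `K₁, K₂` be maximal confluxes of opposite
types at diagonal distance `2` whose main corners are all occupied by cops.
If the robber is in `B(K₁, K₂)`, the cops can force him to eventually occupy
a conflux outside `B(K₁, K₂)`. -/
theorem land_one
    (n k : ℕ) (hk : 2 ≤ k) (hkn : k < n) (hdvd : 2 * k ∣ n)
    (δ ε : ZMod n → ℤ) (cδ cε : ZMod n)
    (hδ : BlockAltAt k δ cδ) (hε : BlockAltAt k ε cε)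
    (P₁ P₂ : Vtx (n / k))
    (hτ : ty (altF (n / k)) (altF (n / k)) P₁ = -(ty (altF (n / k)) (altF (n / k)) P₂))
    (hdd : ddist (altF (n / k)) (altF (n / k)) P₁ P₂ = 2)
    (K₁ K₂ : Set (Vtx n))
    (hK₁ : K₁ = confMap k cδ cε ⁻¹' {P₁}) (hK₂ : K₂ = confMap k cδ cε ⁻¹' {P₂})
    (r₀ : Vtx n)
    (hr : confMap k cδ cε r₀ ∈ BSet (altF (n / k)) (altF (n / k)) P₁ P₂) :
    EnsureFrom (Adj δ ε) (Adj δ ε)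
      (Sum.elim (fun i : {v : Vtx n // MainCorner δ ε K₁ v} => i.val)
                (fun i : {v : Vtx n // MainCorner δ ε K₂ v} => i.val)) r₀
      (fun cops rob =>
        ∃ t, confMap k cδ cε (rob t) ∉ BSet (altF (n / k)) (altF (n / k)) P₁ P₂) := by
  -- The cops are irrelevant: a robber forced to move along the arcs of a
  -- regularly oriented grid must leave the band `B(K₁,K₂)` of three
  -- diagonals of the conflux digraph after finitely many steps.
  refine ⟨fun _ => Sum.elim (fun i : {v : Vtx n // MainCorner δ ε K₁ v} => i.val)
                (fun i : {v : Vtx n // MainCorner δ ε K₂ v} => i.val), ?_⟩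
  intro rob hrob0 hrobStep
  refine ⟨fun t i => by cases t <;> exact Or.inl rfl, ?_⟩
  show ∃ t, confMap k cδ cε (rob t) ∉ BSet (altF (n / k)) (altF (n / k)) P₁ P₂
  by_contra hcon
  push_neg at hcon
  -- numeric setup
  have hk0 : 0 < k := by omega
  have hkdvd : k ∣ n := dvd_trans ⟨2, by ring⟩ hdvd
  have hnk : n = k * (n / k) := (Nat.mul_div_cancel' hkdvd).symm
  have hme : 2 ∣ n / k := by
    obtain ⟨c, hc⟩ := hdvd
    refine ⟨c, ?_⟩
    rw [hc, show 2 * k * c = k * (2 * c) by ring, Nat.mul_div_cancel_left _ hk0]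
  have hm1 : 1 ≤ n / k := (Nat.one_le_div_iff hk0).mpr (le_of_lt hkn)
  have hm4 : 4 ≤ n / k := four_le hme (by omega) P₁ P₂ hτ hdd
  haveI : NeZero (n / k) := ⟨by omega⟩
  have hApm : altF (n / k) P₁.2 = 1 ∨ altF (n / k) P₁.2 = -1 := altF_pm _
  have hBpm : altF (n / k) P₁.1 = 1 ∨ altF (n / k) P₁.1 = -1 := altF_pm _
  have hL0 := L0_parity hme P₁
  refine escape n k hk hm4 hme hnk δ ε cδ cε hδ hε
    (altF (n / k) P₁.2) (altF (n / k) P₁.1) hApm hBpm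
    (((altF (n / k) P₁.1 : ℤ) : ZMod (n / k)) * P₁.1
      + ((altF (n / k) P₁.2 : ℤ) : ZMod (n / k)) * P₁.2) hL0 rob hrobStep ?_
  intro t
  obtain ⟨i, hile, heq⟩ := bset_level P₁ P₂ hApm hBpm rfl rfl (hcon t)
  rw [hdd] at hile
  refine ⟨i, hile, ?_⟩
  simpa [confMap, blk] using heq


end CopsPaper
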